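/- arXiv:0801.1376 — 6 statements merged into one kernel-verified Lean document; each statement's English description precedes it below -/
import Mathlib

section
/- Let a > 0 and let h : [0,a] → ℂ be absolutely continuous with derivative g ∈ L²(0,a). Then |h(0)|² ≤ (2/a)·∫₀ᵃ |h(t)|² dt + a·∫₀ᵃ |g(t)|² dt. -/
open MeasureTheory Set

/-- **Sobolev trace estimate.** If `h : [0,a] → ℂ` is absolutely continuous with
derivative `g ∈ L²(0,a)`, then `|h 0|² ≤ (2/a) ∫₀ᵃ |h|² + a ∫₀ᵃ |g|²`. -/
theorem trace_estimate (a : ℝ) (ha : 0 < a) (h g : ℝ → ℂ)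
    (hg : MemLp g 2 (volume.restrict (Ioo 0 a)))
    (hac : ∀ x ∈ Icc (0:ℝ) a, h x = h 0 + ∫ t in (0:ℝ)..x, g t) :
    ‖h 0‖ ^ 2 ≤ (2 / a) * (∫ t in (0:ℝ)..a, ‖h t‖ ^ 2)
      + a * (∫ t in (0:ℝ)..a, ‖g t‖ ^ 2) := by
  -- transfer Memℒp from Ioo to Ioc
  have hrest : volume.restrict (Ioo 0 a) = volume.restrict (Ioc 0 a) :=
    Measure.restrict_congr_set Ioo_ae_eq_Ioc
  have hg2 : MemLp g 2 (volume.restrict (Ioc 0 a)) := hrest ▸ hg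
  haveI : IsFiniteMeasure (volume.restrict (Ioc (0:ℝ) a)) := by
    constructor
    rw [Measure.restrict_apply_univ, Real.volume_Ioc]
    exact ENNReal.ofReal_lt_top
  -- g integrable on Ioc 0 a
  have hgi : IntegrableOn g (Ioc 0 a) := hg2.integrable (by norm_num)
  -- ‖g‖² integrable on Ioc 0 a
  have hgsq : IntegrableOn (fun t => ‖g t‖ ^ 2) (Ioc 0 a) := by
    have := hg2.integrable_norm_rpow (by norm_num) (by norm_num)
    simpa [ENNReal.toReal_ofNat, Real.rpow_natCast, Real.rpow_two, IntegrableOn] using this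
  set G : ℝ := ∫ t in Ioc (0:ℝ) a, ‖g t‖ ^ 2 with hG
  have hGnn : 0 ≤ G := setIntegral_nonneg measurableSet_Ioc (fun t _ => sq_nonneg _)
  -- key pointwise bound on the primitive
  have key : ∀ x ∈ Icc (0:ℝ) a, ‖∫ t in (0:ℝ)..x, g t‖ ^ 2 ≤ x * G := by
    intro x hx
    have hx0 : (0:ℝ) ≤ x := hx.1
    have hsub : Ioc (0:ℝ) x ⊆ Ioc 0 a := Ioc_subset_Ioc le_rfl hx.2
    have hle1 : ‖∫ t in (0:ℝ)..x, g t‖ ≤ ∫ t in Ioc (0:ℝ) x, ‖g t‖ := by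
      rw [intervalIntegral.integral_of_le hx0]
      exact norm_integral_le_integral_norm g
    haveI : IsFiniteMeasure (volume.restrict (Ioc (0:ℝ) x)) := by
      constructor
      rw [Measure.restrict_apply_univ, Real.volume_Ioc]
      exact ENNReal.ofReal_lt_top
    have hmono : volume.restrict (Ioc (0:ℝ) x) ≤ volume.restrict (Ioc 0 a) :=
      Measure.restrict_mono hsub le_rfl
    have hgx : MemLp (fun t => ‖g t‖) (ENNReal.ofReal 2) (volume.restrict (Ioc 0 x)) := by
      have : MemLp g 2 (volume.restrict (Ioc 0 x)) := hg2.mono_measure hmono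
      simpa [ENNReal.ofReal_ofNat] using this.norm
    have hone : MemLp (fun _ : ℝ => (1:ℝ)) (ENNReal.ofReal 2) (volume.restrict (Ioc 0 x)) :=
      memLp_const 1
    have hCS := integral_mul_le_Lp_mul_Lq_of_nonneg
      (Real.HolderConjugate.two_two : Real.HolderConjugate 2 2)
      (Filter.Eventually.of_forall fun t => norm_nonneg (g t))
      (Filter.Eventually.of_forall fun _ => zero_le_one) hgx hone
    simp only [mul_one, Real.rpow_two, one_pow] at hCS
    have hconst : ∫ _ in Ioc (0:ℝ) x, (1:ℝ) = x := by
      simp [Real.volume_Ioc, ENNReal.toReal_ofReal hx0, hx0]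
    rw [hconst, ← Real.sqrt_eq_rpow, ← Real.sqrt_eq_rpow] at hCS
    set A : ℝ := ∫ t in Ioc (0:ℝ) x, ‖g t‖ ^ 2 with hA
    have hAnn : 0 ≤ A := setIntegral_nonneg measurableSet_Ioc (fun t _ => sq_nonneg _)
    have hAG : A ≤ G :=
      setIntegral_mono_set hgsq
        (Filter.Eventually.of_forall fun t => sq_nonneg _) hsub.eventuallyLE
    calc ‖∫ t in (0:ℝ)..x, g t‖ ^ 2 ≤ (Real.sqrt A * Real.sqrt x) ^ 2 :=
          pow_le_pow_left₀ (norm_nonneg _) (hle1.trans hCS) 2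
      _ = A * x := by rw [mul_pow, Real.sq_sqrt hAnn, Real.sq_sqrt hx0]
      _ ≤ x * G := by rw [mul_comm]; exact mul_le_mul_of_nonneg_left hAG hx0
  -- integrability of ‖h‖² on Ioc 0 a
  have hgIcc : IntegrableOn g (Icc 0 a) := (integrableOn_Icc_iff_integrableOn_Ioc).mpr hgi
  have hprim : ContinuousOn (fun x => ∫ t in (0:ℝ)..x, g t) (Icc 0 a) := by
    have := intervalIntegral.continuousOn_primitive_interval
      (a := 0) (b := a) (μ := volume) (f := g) (by rwa [uIcc_of_le ha.le])
    rwa [uIcc_of_le ha.le] at this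
  have hFc : ContinuousOn (fun x => ‖h 0 + ∫ t in (0:ℝ)..x, g t‖ ^ 2) (Icc 0 a) :=
    ((continuousOn_const.add hprim).norm).pow 2
  have hhsq : IntegrableOn (fun x => ‖h x‖ ^ 2) (Ioc 0 a) := by
    have h1 : IntegrableOn (fun x => ‖h 0 + ∫ t in (0:ℝ)..x, g t‖ ^ 2) (Icc 0 a) :=
      hFc.integrableOn_compact isCompact_Icc
    refine ((h1.mono_set Ioc_subset_Icc_self).congr_fun ?_ measurableSet_Ioc)
    intro x hx
    simp only [← hac x (Ioc_subset_Icc_self hx)]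
  set H : ℝ := ∫ t in Ioc (0:ℝ) a, ‖h t‖ ^ 2 with hH
  -- main integrated inequality
  have hmain : a * ‖h 0‖ ^ 2 ≤ 2 * H + a ^ 2 * G := by
    have hpoint : ∀ x ∈ Ioc (0:ℝ) a, ‖h 0‖ ^ 2 ≤ 2 * ‖h x‖ ^ 2 + 2 * (x * G) := by
      intro x hx
      have hx' : x ∈ Icc (0:ℝ) a := Ioc_subset_Icc_self hx
      have e : h 0 = h x - ∫ t in (0:ℝ)..x, g t := by rw [hac x hx']; ring
      have htri : ‖h 0‖ ≤ ‖h x‖ + ‖∫ t in (0:ℝ)..x, g t‖ := by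
        rw [e]; exact norm_sub_le _ _
      have hk := key x hx'
      nlinarith [sq_nonneg (‖h x‖ - ‖∫ t in (0:ℝ)..x, g t‖), norm_nonneg (h 0),
        norm_nonneg (h x), norm_nonneg (∫ t in (0:ℝ)..x, g t),
        pow_le_pow_left₀ (norm_nonneg (h 0)) htri 2]
    have hxint : IntegrableOn (fun x : ℝ => 2 * (x * G)) (Ioc 0 a) := by
      apply Continuous.integrableOn_Ioc
      fun_prop
    have hint2 : IntegrableOn (fun x => 2 * ‖h x‖ ^ 2 + 2 * (x * G)) (Ioc 0 a) :=
      (hhsq.const_mul 2).add hxint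
    have hintc : IntegrableOn (fun _ : ℝ => ‖h 0‖ ^ 2) (Ioc 0 a) :=
      integrableOn_const (by rw [Real.volume_Ioc]; exact ENNReal.ofReal_ne_top)
    have hid : ∫ x in Ioc (0:ℝ) a, x = a ^ 2 / 2 := by
      rw [← intervalIntegral.integral_of_le ha.le]
      simp [integral_id]
    calc a * ‖h 0‖ ^ 2 = ∫ _ in Ioc (0:ℝ) a, ‖h 0‖ ^ 2 := by
          simp [Real.volume_Ioc, ENNReal.toReal_ofReal ha.le, ha.le]
      _ ≤ ∫ x in Ioc (0:ℝ) a, (2 * ‖h x‖ ^ 2 + 2 * (x * G)) :=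
          setIntegral_mono_on hintc hint2 measurableSet_Ioc hpoint
      _ = 2 * H + a ^ 2 * G := by
          rw [integral_add (hhsq.const_mul 2) hxint, MeasureTheory.integral_const_mul]
          have : ∫ x in Ioc (0:ℝ) a, 2 * (x * G) = 2 * ((∫ x in Ioc (0:ℝ) a, x) * G) := by
            rw [MeasureTheory.integral_const_mul, integral_mul_const]
          rw [this, hid]
          ring
  rw [intervalIntegral.integral_of_le ha.le, intervalIntegral.integral_of_le ha.le, ← hH, ← hG]
  rw [show (2 / a) * H + a * G = (2 * H + a ^ 2 * G) / a by field_simp]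
  rw [le_div_iff₀ ha]
  linarith [hmain]
end

section
/- Let a > 0 and a ≤ l ≤ 2a. Let V ∈ L²(0,l) and let h : [0,l] → ℂ be absolutely continuous with derivative g ∈ L²(0,l). Then ∫₀ˡ |V(t)h(t)|² dt ≤ (∫₀ˡ |V(t)|² dt) · ((a/2)·∫₀ˡ |g(t)|² dt + (4/a)·∫₀ˡ |h(t)|² dt). -/
open MeasureTheory Set

/-- Cauchy–Schwarz on a subinterval: `‖∫_c^d g‖² ≤ (d-c) ∫_{(0,l]} ‖g‖²`. -/
lemma segment_cauchy_schwarz (c d l : ℝ) (g : ℝ → ℂ) (hc : 0 ≤ c) (hcd : c ≤ d) (hdl : d ≤ l)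
    (hg : MemLp g 2 (volume.restrict (Ioo 0 l)))
    (hg2 : IntegrableOn (fun t => ‖g t‖ ^ 2) (Ioc 0 l) volume) :
    ‖∫ u in c..d, g u‖ ^ 2 ≤ (d - c) * ∫ t in Ioc 0 l, ‖g t‖ ^ 2 := by
  have hsubμ : volume.restrict (Ioc c d) ≤ volume.restrict (Ioo 0 l) := by
    rw [show volume.restrict (Ioc c d) = volume.restrict (Ioo c d) from
      (Measure.restrict_congr_set Ioo_ae_eq_Ioc).symm]
    exact Measure.restrict_mono (Ioo_subset_Ioo hc hdl) le_rfl
  haveI : IsFiniteMeasure (volume.restrict (Ioc c d)) :=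
    ⟨by rw [Measure.restrict_apply_univ]; exact measure_Ioc_lt_top⟩
  have hgm : MemLp (fun u => ‖g u‖) 2 (volume.restrict (Ioc c d)) :=
    (hg.mono_measure hsubμ).norm
  have hone : MemLp (fun _ : ℝ => (1:ℝ)) 2 (volume.restrict (Ioc c d)) := memLp_const 1
  have hpq : Real.HolderConjugate 2 2 := by constructor <;> norm_num
  have hcs := integral_mul_le_Lp_mul_Lq_of_nonneg (μ := volume.restrict (Ioc c d)) hpq
    (f := fun u => ‖g u‖) (g := fun _ => (1:ℝ)) (ae_of_all _ fun x => norm_nonneg _)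
    (ae_of_all _ fun _ => zero_le_one) (by simpa using hgm) (by simpa using hone)
  simp only [mul_one] at hcs
  have e1 : (∫ u in Ioc c d, ‖g u‖ ^ (2:ℝ)) = ∫ u in Ioc c d, ‖g u‖ ^ 2 := by
    congr 1; ext u; rw [show ((2:ℝ)) = ((2:ℕ):ℝ) by norm_num, Real.rpow_natCast]
  have e2 : (∫ _ in Ioc c d, (1:ℝ) ^ (2:ℝ)) = d - c := by
    simp [Real.volume_Ioc, ENNReal.toReal_ofReal (by linarith : (0:ℝ) ≤ d - c), hcd]
  rw [e1, e2] at hcs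
  have hX : 0 ≤ ∫ u in Ioc c d, ‖g u‖ ^ 2 :=
    integral_nonneg fun u => by positivity
  have h1 : ‖∫ u in c..d, g u‖ ≤ ∫ u in Ioc c d, ‖g u‖ := by
    rw [← intervalIntegral.integral_of_le hcd]
    exact intervalIntegral.norm_integral_le_integral_norm hcd
  have h2 : (∫ u in Ioc c d, ‖g u‖) ^ 2 ≤
      ((∫ u in Ioc c d, ‖g u‖ ^ 2) ^ ((1:ℝ)/2) * (d - c) ^ ((1:ℝ)/2)) ^ 2 :=
    pow_le_pow_left₀ (integral_nonneg fun u => norm_nonneg _) hcs 2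
  have h3 : ((∫ u in Ioc c d, ‖g u‖ ^ 2) ^ ((1:ℝ)/2) * (d - c) ^ ((1:ℝ)/2)) ^ 2
      = (∫ u in Ioc c d, ‖g u‖ ^ 2) * (d - c) := by
    rw [mul_pow, ← Real.rpow_natCast (_ ^ ((1:ℝ)/2)) 2, ← Real.rpow_natCast ((d-c) ^ ((1:ℝ)/2)) 2,
      ← Real.rpow_mul hX, ← Real.rpow_mul (by linarith)]
    norm_num
  have h4 : (∫ u in Ioc c d, ‖g u‖ ^ 2) ≤ ∫ t in Ioc 0 l, ‖g t‖ ^ 2 := by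
    apply setIntegral_mono_set hg2 (ae_of_all _ fun u => by positivity)
    exact HasSubset.Subset.eventuallyLE (Ioc_subset_Ioc hc hdl)
  calc ‖∫ u in c..d, g u‖ ^ 2 ≤ (∫ u in Ioc c d, ‖g u‖) ^ 2 :=
        pow_le_pow_left₀ (norm_nonneg _) h1 2
    _ ≤ (∫ u in Ioc c d, ‖g u‖ ^ 2) * (d - c) := by rw [← h3]; exact h2
    _ ≤ (∫ t in Ioc 0 l, ‖g t‖ ^ 2) * (d - c) :=
        mul_le_mul_of_nonneg_right h4 (by linarith)
    _ = (d - c) * ∫ t in Ioc 0 l, ‖g t‖ ^ 2 := mul_comm _ _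

/-- **Single-segment potential estimate.** For `0 < a ≤ l ≤ 2a`, `V ∈ L²(0,l)` and `h`
absolutely continuous on `[0,l]` with derivative `g ∈ L²(0,l)`,
`∫₀ˡ |V h|² ≤ (∫₀ˡ |V|²) ((a/2) ∫₀ˡ |g|² + (4/a) ∫₀ˡ |h|²)`. -/
theorem potential_segment_estimate (a l : ℝ) (ha : 0 < a) (hal : a ≤ l) (hl : l ≤ 2 * a)
    (V h g : ℝ → ℂ)
    (hV : MemLp V 2 (volume.restrict (Ioo 0 l)))
    (hg : MemLp g 2 (volume.restrict (Ioo 0 l)))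
    (hac : ∀ x ∈ Icc (0:ℝ) l, h x = h 0 + ∫ t in (0:ℝ)..x, g t) :
    (∫ t in (0:ℝ)..l, ‖V t * h t‖ ^ 2) ≤
      (∫ t in (0:ℝ)..l, ‖V t‖ ^ 2) *
        ((a / 2) * (∫ t in (0:ℝ)..l, ‖g t‖ ^ 2)
          + (4 / a) * (∫ t in (0:ℝ)..l, ‖h t‖ ^ 2)) := by
  have h0l : (0:ℝ) ≤ l := ha.le.trans hal
  have ha' : a ≠ 0 := ha.ne'
  have hrestr : volume.restrict (Ioo (0:ℝ) l) = volume.restrict (Ioc (0:ℝ) l) :=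
    Measure.restrict_congr_set Ioo_ae_eq_Ioc
  haveI : IsFiniteMeasure (volume.restrict (Ioo (0:ℝ) l)) :=
    ⟨by rw [Measure.restrict_apply_univ]; exact measure_Ioo_lt_top⟩
  -- integrability of g and ‖g‖²
  have hgi : IntegrableOn g (Ioo 0 l) volume := hg.integrable (by norm_num)
  have hgIcc : IntegrableOn g (Icc 0 l) volume := (integrableOn_Icc_iff_integrableOn_Ioo).mpr hgi
  have hg2 : IntegrableOn (fun t => ‖g t‖ ^ 2) (Ioc 0 l) volume := by
    have := hg.norm.integrable_sq
    rwa [hrestr] at this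
  -- the primitive f, continuous on [0,l], equal to h there
  set f : ℝ → ℂ := fun x => h 0 + ∫ t in (0:ℝ)..x, g t with hfdef
  have hfc : ContinuousOn f (Icc 0 l) := by
    have hprim := intervalIntegral.continuousOn_primitive_interval
      (a := 0) (b := l) (μ := volume) (f := g) (by rwa [uIcc_of_le h0l])
    rw [uIcc_of_le h0l] at hprim
    exact continuousOn_const.add hprim
  have hhf : EqOn h f (Icc 0 l) := fun x hx => hac x hx
  have hintg : ∀ x ∈ Icc (0:ℝ) l, IntervalIntegrable g volume 0 x := fun x hx => by
    have : IntegrableOn g (Icc 0 x) volume := hgIcc.mono_set (Icc_subset_Icc le_rfl hx.2)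
    rw [← uIcc_of_le hx.1] at this
    exact this.intervalIntegrable
  have hdiff : ∀ t ∈ Icc (0:ℝ) l, ∀ s ∈ Icc (0:ℝ) l, f s - f t = ∫ u in t..s, g u := by
    intro t ht s hs
    simp only [hfdef]
    rw [add_sub_add_left_eq_sub]
    exact intervalIntegral.integral_interval_sub_left (hintg s hs) (hintg t ht)
  -- abbreviations
  set G := ∫ t in Ioc (0:ℝ) l, ‖g t‖ ^ 2 with hGdef
  have hGnn : 0 ≤ G := integral_nonneg fun u => by positivity
  have hf2i : IntegrableOn (fun s => ‖f s‖ ^ 2) (Ioc 0 l) volume := by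
    apply IntegrableOn.mono_set _ Ioc_subset_Icc_self
    exact (ContinuousOn.pow hfc.norm 2).integrableOn_Icc
  set Hf := ∫ t in Ioc (0:ℝ) l, ‖f t‖ ^ 2 with hHfdef
  have hHfnn : 0 ≤ Hf := integral_nonneg fun u => by positivity
  set M := a / 2 * G + 4 / a * Hf with hMdef
  have hMnn : 0 ≤ M := by positivity
  -- continuity-based interval integrability of ‖f‖² on subintervals of [0,l]
  have hf2int : ∀ c d : ℝ, Icc c d ⊆ Icc 0 l → c ≤ d →
      IntervalIntegrable (fun s => ‖f s‖ ^ 2) volume c d := by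
    intro c d hsub hcd
    apply ContinuousOn.intervalIntegrable
    rw [uIcc_of_le hcd]
    exact (hfc.norm.pow 2).mono hsub
  -- window integral of ‖f‖² is at most Hf
  have hwin : ∀ c d : ℝ, 0 ≤ c → c ≤ d → d ≤ l →
      (∫ s in c..d, ‖f s‖ ^ 2) ≤ Hf := by
    intro c d hc hcd hdl
    rw [intervalIntegral.integral_of_le hcd]
    apply setIntegral_mono_set hf2i (ae_of_all _ fun u => by positivity)
    exact HasSubset.Subset.eventuallyLE (Ioc_subset_Ioc hc hdl)
  -- the key pointwise bound
  have hfbound : ∀ t ∈ Icc (0:ℝ) l, ‖f t‖ ^ 2 ≤ M := by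
    intro t ht
    have hr0 : (0:ℝ) < a / 2 := by positivity
    have htri : ∀ s ∈ Icc (0:ℝ) l, ‖f t‖ ^ 2 ≤ 2 * ‖f s‖ ^ 2 + 2 * ‖∫ u in t..s, g u‖ ^ 2 := by
      intro s hs
      have h1 : ‖f t‖ ≤ ‖f s‖ + ‖∫ u in t..s, g u‖ := by
        rw [← hdiff t ht s hs]
        calc ‖f t‖ = ‖f s - (f s - f t)‖ := by ring_nf
          _ ≤ ‖f s‖ + ‖f s - f t‖ := norm_sub_le _ _
      have h2 := mul_self_le_mul_self (norm_nonneg (f t)) h1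
      nlinarith [h2, sq_nonneg (‖f s‖ - ‖∫ u in t..s, g u‖)]
    have heq : (2 * Hf + G * (a / 2) ^ 2) / (a / 2) = a / 2 * G + 4 / a * Hf := by
      field_simp
      ring
    rcases le_or_gt t (a / 2) with hcase | hcase
    · -- window [t, t + a/2]
      have hsub : Icc t (t + a / 2) ⊆ Icc 0 l := Icc_subset_Icc ht.1 (by linarith)
      have hpt : ∀ s ∈ Icc t (t + a / 2), ‖f t‖ ^ 2 ≤ 2 * ‖f s‖ ^ 2 + 2 * ((s - t) * G) := by
        intro s hs
        have hs' := hsub hs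
        refine (htri s hs').trans ?_
        have := segment_cauchy_schwarz t s l g ht.1 hs.1 hs'.2 hg hg2
        linarith
      have hle : t ≤ t + a / 2 := by linarith
      have hconst : (∫ _ in t..(t + a / 2), ‖f t‖ ^ 2) = a / 2 * ‖f t‖ ^ 2 := by
        simp [intervalIntegral.integral_const, smul_eq_mul]
      have hlin : (∫ s in t..(t + a / 2), (s - t)) = (a / 2) ^ 2 / 2 := by
        rw [show (fun s : ℝ => s - t) = fun s : ℝ => id (s - t) from rfl,
          intervalIntegral.integral_comp_sub_right (fun x => id x) t]
        simp [integral_id]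
      have hint1 := hf2int t (t + a / 2) hsub hle
      have hint2 : IntervalIntegrable (fun s : ℝ => 2 * ‖f s‖ ^ 2 + 2 * ((s - t) * G))
          volume t (t + a / 2) := by
        apply IntervalIntegrable.add (hint1.const_mul 2)
        apply ContinuousOn.intervalIntegrable
        exact continuousOn_const.mul ((continuousOn_id.sub continuousOn_const).mul continuousOn_const)
      have hmono := intervalIntegral.integral_mono_on hle
        (intervalIntegrable_const (c := ‖f t‖ ^ 2)) hint2 hpt
      rw [hconst] at hmono
      have hsplit : (∫ s in t..(t + a / 2), (2 * ‖f s‖ ^ 2 + 2 * ((s - t) * G)))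
          = 2 * (∫ s in t..(t + a / 2), ‖f s‖ ^ 2) + 2 * G * ((a / 2) ^ 2 / 2) := by
        rw [intervalIntegral.integral_add (hint1.const_mul 2)
          (by apply ContinuousOn.intervalIntegrable
              exact continuousOn_const.mul
                ((continuousOn_id.sub continuousOn_const).mul continuousOn_const)),
          intervalIntegral.integral_const_mul]
        congr 1
        rw [show (fun s : ℝ => 2 * ((s - t) * G)) = fun s : ℝ => (2 * G) * (s - t) from
          funext fun s => by ring, intervalIntegral.integral_const_mul, hlin]
      rw [hsplit] at hmono
      have hw := hwin t (t + a / 2) ht.1 hle (hsub (right_mem_Icc.mpr hle)).2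
      rw [hMdef, ← heq, le_div_iff₀ hr0]
      nlinarith [hmono, hw]
    · -- window [t - a/2, t]
      have hsub : Icc (t - a / 2) t ⊆ Icc 0 l := Icc_subset_Icc (by linarith) ht.2
      have hpt : ∀ s ∈ Icc (t - a / 2) t, ‖f t‖ ^ 2 ≤ 2 * ‖f s‖ ^ 2 + 2 * ((t - s) * G) := by
        intro s hs
        have hs' := hsub hs
        refine (htri s hs').trans ?_
        have hnorm : ‖∫ u in t..s, g u‖ = ‖∫ u in s..t, g u‖ := by
          rw [intervalIntegral.integral_symm, norm_neg]
        have := segment_cauchy_schwarz s t l g hs'.1 hs.2 ht.2 hg hg2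
        rw [hnorm]
        linarith
      have hle : t - a / 2 ≤ t := by linarith
      have hconst : (∫ _ in (t - a / 2)..t, ‖f t‖ ^ 2) = a / 2 * ‖f t‖ ^ 2 := by
        simp [intervalIntegral.integral_const, smul_eq_mul]
      have hlin : (∫ s in (t - a / 2)..t, (t - s)) = (a / 2) ^ 2 / 2 := by
        rw [show (fun s : ℝ => t - s) = fun s : ℝ => id (t - s) from rfl,
          intervalIntegral.integral_comp_sub_left (fun x => id x) t]
        simp [integral_id]
      have hint1 := hf2int (t - a / 2) t hsub hle
      have hint2 : IntervalIntegrable (fun s : ℝ => 2 * ‖f s‖ ^ 2 + 2 * ((t - s) * G))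
          volume (t - a / 2) t := by
        apply IntervalIntegrable.add (hint1.const_mul 2)
        apply ContinuousOn.intervalIntegrable
        exact continuousOn_const.mul ((continuousOn_const.sub continuousOn_id).mul continuousOn_const)
      have hmono := intervalIntegral.integral_mono_on hle
        (intervalIntegrable_const (c := ‖f t‖ ^ 2)) hint2 hpt
      rw [hconst] at hmono
      have hsplit : (∫ s in (t - a / 2)..t, (2 * ‖f s‖ ^ 2 + 2 * ((t - s) * G)))
          = 2 * (∫ s in (t - a / 2)..t, ‖f s‖ ^ 2) + 2 * G * ((a / 2) ^ 2 / 2) := by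
        rw [intervalIntegral.integral_add (hint1.const_mul 2)
          (by apply ContinuousOn.intervalIntegrable
              exact continuousOn_const.mul
                ((continuousOn_const.sub continuousOn_id).mul continuousOn_const)),
          intervalIntegral.integral_const_mul]
        congr 1
        rw [show (fun s : ℝ => 2 * ((t - s) * G)) = fun s : ℝ => (2 * G) * (t - s) from
          funext fun s => by ring, intervalIntegral.integral_const_mul, hlin]
      rw [hsplit] at hmono
      have hw := hwin (t - a / 2) t (hsub (left_mem_Icc.mpr hle)).1 hle ht.2
      rw [hMdef, ← heq, le_div_iff₀ hr0]
      nlinarith [hmono, hw]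
  -- ‖V‖² integrable on Ioc
  have hV2 : IntegrableOn (fun t => ‖V t‖ ^ 2) (Ioc 0 l) volume := by
    have := hV.norm.integrable_sq
    rwa [hrestr] at this
  -- measurability of ‖V·h‖²
  have hVm : AEStronglyMeasurable V (volume.restrict (Ioc 0 l)) := by
    rw [← hrestr]; exact hV.1
  have hfm : AEStronglyMeasurable f (volume.restrict (Ioc 0 l)) :=
    (hfc.mono Ioc_subset_Icc_self).aestronglyMeasurable measurableSet_Ioc
  have hheq : h =ᵐ[volume.restrict (Ioc 0 l)] f :=
    (ae_restrict_iff' measurableSet_Ioc).mpr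
      (ae_of_all _ fun x hx => hhf (Ioc_subset_Icc_self hx))
  have hhm : AEStronglyMeasurable h (volume.restrict (Ioc 0 l)) := hfm.congr hheq.symm
  have hVhm : AEStronglyMeasurable (fun t => ‖V t * h t‖ ^ 2) (volume.restrict (Ioc 0 l)) :=
    (continuous_pow 2).comp_aestronglyMeasurable (hVm.mul hhm).norm
  -- pointwise domination
  have hdom : ∀ᵐ x ∂volume.restrict (Ioc 0 l), ‖V x * h x‖ ^ 2 ≤ ‖V x‖ ^ 2 * M := by
    refine (ae_restrict_iff' measurableSet_Ioc).mpr (ae_of_all _ fun x hx => ?_)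
    have hxIcc : x ∈ Icc (0:ℝ) l := Ioc_subset_Icc_self hx
    have hb : ‖h x‖ ^ 2 ≤ M := by
      rw [hhf hxIcc]; exact hfbound x hxIcc
    calc ‖V x * h x‖ ^ 2 = ‖V x‖ ^ 2 * ‖h x‖ ^ 2 := by rw [norm_mul, mul_pow]
      _ ≤ ‖V x‖ ^ 2 * M := mul_le_mul_of_nonneg_left hb (by positivity)
  have hVhi : IntegrableOn (fun t => ‖V t * h t‖ ^ 2) (Ioc 0 l) volume := by
    refine Integrable.mono (hV2.mul_const M) hVhm ?_
    filter_upwards [hdom] with x hx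
    rw [Real.norm_of_nonneg (by positivity), Real.norm_of_nonneg
      (mul_nonneg (by positivity) hMnn)]
    exact hx
  -- conclude
  have hH : (∫ t in (0:ℝ)..l, ‖h t‖ ^ 2) = Hf := by
    rw [intervalIntegral.integral_of_le h0l]
    exact setIntegral_congr_ae measurableSet_Ioc
      (ae_of_all _ fun x hx => by rw [hhf (Ioc_subset_Icc_self hx)])
  have hGeq : (∫ t in (0:ℝ)..l, ‖g t‖ ^ 2) = G := intervalIntegral.integral_of_le h0l
  rw [hH, hGeq, ← hMdef]
  rw [intervalIntegral.integral_of_le h0l, intervalIntegral.integral_of_le h0l]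
  calc (∫ t in Ioc (0:ℝ) l, ‖V t * h t‖ ^ 2)
      ≤ ∫ t in Ioc (0:ℝ) l, ‖V t‖ ^ 2 * M :=
        integral_mono_ae hVhi (hV2.mul_const M) hdom
    _ = (∫ t in Ioc (0:ℝ) l, ‖V t‖ ^ 2) * M := integral_mul_const _ _
end

section
/- Let (X,d) be a metric space, μ a Borel measure on X, and x₀ ∈ X such that r ≤ μ(B(x₀,r)) < ∞ for every r > 0, where B(x₀,r) denotes the open ball of radius r around x₀. Let ε > 0 and define w : X → ℝ by w(x) = μ(B(x₀, d(x,x₀)+1))^{1+ε}. Then w(x) ≥ 1 for all x ∈ X and ∫_X w(x)^{−2} dμ(x) < ∞. -/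
open MeasureTheory Set

/-- **An admissible weight function.** If `μ(B(x₀,r)) ≥ r` is finite for all `r > 0`
and `w x = μ(B(x₀, d(x,x₀)+1))^{1+ε}`, then `w ≥ 1` and `w⁻² ∈ L¹(μ)`. -/
theorem weight_function (X : Type*) [MetricSpace X] [MeasurableSpace X] [BorelSpace X]
    (μ : Measure X) (x₀ : X)
    (hμ : ∀ r : ℝ, 0 < r →
      ENNReal.ofReal r ≤ μ (Metric.ball x₀ r) ∧ μ (Metric.ball x₀ r) < ⊤)
    (ε : ℝ) (hε : 0 < ε) (w : X → ℝ)
    (hw : ∀ x, w x = (μ (Metric.ball x₀ (dist x x₀ + 1))).toReal ^ (1 + ε)) :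
    (∀ x, 1 ≤ w x) ∧ Integrable (fun x => (w x ^ 2)⁻¹) μ := by
  have hεpos : (0:ℝ) < 1 + ε := by linarith
  -- finiteness of balls
  have hfin : ∀ r : ℝ, μ (Metric.ball x₀ r) ≠ ⊤ := by
    intro r
    rcases le_or_gt r 0 with h | h
    · rw [Metric.ball_eq_empty.mpr h]; simp
    · exact (hμ r h).2.ne
  -- lower bound on toReal of ball measure
  have hlow : ∀ r : ℝ, 0 < r → r ≤ (μ (Metric.ball x₀ r)).toReal := by
    intro r hr
    exact (ENNReal.ofReal_le_iff_le_toReal (hfin r)).mp (hμ r hr).1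
  -- base of w
  set b : X → ℝ := fun x => (μ (Metric.ball x₀ (dist x x₀ + 1))).toReal with hb
  have hb1 : ∀ x, 1 ≤ b x := by
    intro x
    have h1 : (0:ℝ) < dist x x₀ + 1 := by positivity
    calc (1:ℝ) ≤ dist x x₀ + 1 := by linarith [dist_nonneg (x := x) (y := x₀)]
    _ ≤ b x := hlow _ h1
  have hw1 : ∀ x, 1 ≤ w x := by
    intro x
    rw [hw x]
    exact Real.one_le_rpow (hb1 x) hεpos.le
  refine ⟨hw1, ?_⟩
  -- measurability
  have hg : Monotone (fun r : ℝ => (μ (Metric.ball x₀ (r + 1))).toReal ^ (1 + ε)) := by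
    intro r s hrs
    have h1 : μ (Metric.ball x₀ (r + 1)) ≤ μ (Metric.ball x₀ (s + 1)) :=
      measure_mono (Metric.ball_subset_ball (by linarith))
    exact Real.rpow_le_rpow ENNReal.toReal_nonneg (ENNReal.toReal_mono (hfin _) h1) hεpos.le
  have hwm : Measurable w := by
    have : w = (fun r : ℝ => (μ (Metric.ball x₀ (r + 1))).toReal ^ (1 + ε)) ∘
        (fun x => dist x x₀) := by
      funext x; simp [hw x]
    rw [this]
    exact hg.measurable.comp (Continuous.dist continuous_id continuous_const).measurable
  have hfm : Measurable fun x => (w x ^ 2)⁻¹ := ((hwm.pow_const 2).inv)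
  refine ⟨hfm.aestronglyMeasurable, ?_⟩
  rw [hasFiniteIntegral_iff_ofReal (Filter.Eventually.of_forall fun x => by positivity)]
  -- annuli
  set A : ℕ → Set X := fun n => Metric.ball x₀ (n + 1) \ Metric.ball x₀ n with hA
  have hcover : (⋃ n, A n) = univ := by
    ext x
    simp only [mem_iUnion, mem_univ, iff_true, hA, mem_diff, Metric.mem_ball, not_lt]
    exact ⟨⌊dist x x₀⌋₊, Nat.lt_floor_add_one _, Nat.floor_le dist_nonneg⟩
  have key : ∫⁻ x, ENNReal.ofReal ((w x ^ 2)⁻¹) ∂μ ≤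
      ∑' n : ℕ, ENNReal.ofReal (((n:ℝ) + 1) ^ (-(1 + 2 * ε))) := by
    calc ∫⁻ x, ENNReal.ofReal ((w x ^ 2)⁻¹) ∂μ
        = ∫⁻ x in ⋃ n, A n, ENNReal.ofReal ((w x ^ 2)⁻¹) ∂μ := by
          rw [hcover, setLIntegral_univ]
      _ ≤ ∑' n : ℕ, ∫⁻ x in A n, ENNReal.ofReal ((w x ^ 2)⁻¹) ∂μ :=
          lintegral_iUnion_le _ _
      _ ≤ ∑' n : ℕ, ENNReal.ofReal (((n:ℝ) + 1) ^ (-(1 + 2 * ε))) := by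
          refine ENNReal.tsum_le_tsum fun n => ?_
          set Vn : ℝ := (μ (Metric.ball x₀ ((n:ℝ) + 1))).toReal with hVn
          have hVn1 : (n:ℝ) + 1 ≤ Vn := hlow _ (by positivity)
          have hVnpos : (0:ℝ) < Vn := lt_of_lt_of_le (by positivity) hVn1
          -- pointwise bound on A n
          have hpt : ∀ x ∈ A n, ENNReal.ofReal ((w x ^ 2)⁻¹) ≤
              ENNReal.ofReal ((Vn ^ (1 + ε) * Vn ^ (1 + ε))⁻¹) := by
            intro x hx
            rcases hx with ⟨_, hx2⟩
            have hnd : (n:ℝ) ≤ dist x x₀ := not_lt.mp (by simpa using hx2)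
            have hVb : Vn ≤ b x := by
              refine ENNReal.toReal_mono (hfin _) (measure_mono (Metric.ball_subset_ball ?_))
              linarith
            have hwge : Vn ^ (1 + ε) ≤ w x := by
              rw [hw x]
              exact Real.rpow_le_rpow hVnpos.le hVb hεpos.le
            have hVrpos : (0:ℝ) < Vn ^ (1 + ε) := Real.rpow_pos_of_pos hVnpos _
            apply ENNReal.ofReal_le_ofReal
            apply inv_anti₀ (by positivity)
            rw [pow_two]
            exact mul_le_mul hwge hwge hVrpos.le (le_trans hVrpos.le hwge)
          calc ∫⁻ x in A n, ENNReal.ofReal ((w x ^ 2)⁻¹) ∂μ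
              ≤ ∫⁻ _ in A n, ENNReal.ofReal ((Vn ^ (1 + ε) * Vn ^ (1 + ε))⁻¹) ∂μ := by
                refine setLIntegral_mono' (measurableSet_ball.diff measurableSet_ball) hpt
            _ = ENNReal.ofReal ((Vn ^ (1 + ε) * Vn ^ (1 + ε))⁻¹) * μ (A n) := by
                rw [setLIntegral_const]
            _ ≤ ENNReal.ofReal ((Vn ^ (1 + ε) * Vn ^ (1 + ε))⁻¹) * ENNReal.ofReal Vn := by
                gcongr
                rw [hVn, ENNReal.ofReal_toReal (hfin _)]
                exact measure_mono diff_subset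
            _ = ENNReal.ofReal ((Vn ^ (1 + ε) * Vn ^ (1 + ε))⁻¹ * Vn) := by
                rw [ENNReal.ofReal_mul (by positivity)]
            _ ≤ ENNReal.ofReal (((n:ℝ) + 1) ^ (-(1 + 2 * ε))) := by
                apply ENNReal.ofReal_le_ofReal
                have heq : (Vn ^ (1 + ε) * Vn ^ (1 + ε))⁻¹ * Vn = Vn ^ (-(1 + 2 * ε)) := by
                  have h1 : (Vn ^ (1 + ε) * Vn ^ (1 + ε))⁻¹ * Vn
                      = Vn ^ (-(1 + ε)) * Vn ^ (-(1 + ε)) * Vn ^ (1:ℝ) := by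
                    rw [Real.rpow_neg hVnpos.le, Real.rpow_one, mul_inv]
                  rw [h1, ← Real.rpow_add hVnpos, ← Real.rpow_add hVnpos]
                  congr 1
                  ring
                rw [heq]
                exact Real.rpow_le_rpow_of_nonpos (by positivity) hVn1 (by linarith)
  refine lt_of_le_of_lt key ?_
  have hsum : Summable (fun n : ℕ => ((n:ℝ) + 1) ^ (-(1 + 2 * ε))) := by
    have h1 : Summable (fun n : ℕ => ((n:ℝ) ^ (1 + 2 * ε))⁻¹) :=
      Real.summable_nat_rpow_inv.mpr (by linarith)
    have h2 := (summable_nat_add_iff 1).mpr h1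
    refine h2.congr fun n => ?_
    rw [← Real.rpow_neg (by positivity)]
    push_cast
    ring_nf
  rw [← ENNReal.ofReal_tsum_of_nonneg (fun n => Real.rpow_nonneg (by positivity) _) hsum]
  exact ENNReal.ofReal_lt_top
end

section
/- Let (X, 𝔄, μ) be a σ-finite measure space, c > 0, and A : L²(μ;ℂ) → L²(μ;ℂ) a bounded linear operator such that for every f ∈ L²(μ), the image Af has an essentially bounded representative with essential supremum at most c·‖f‖_{L²}. Let (eᵢ)_{i∈ℕ} be an orthonormal sequence in L²(μ) and for each i let fᵢ be a representative of A eᵢ. Then for μ-almost every x ∈ X one has Σ_{i=1}^∞ |fᵢ(x)|² ≤ c². -/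
open MeasureTheory

/-- Coercion of a finite sum in `Lp` agrees a.e. with the sum of coercions. -/
lemma Lp_coeFn_finsum {X : Type*} [MeasurableSpace X] {μ : Measure X}
    (s : Finset ℕ) (g : ℕ → Lp ℂ 2 μ) :
    (((∑ i ∈ s, g i : Lp ℂ 2 μ) : Lp ℂ 2 μ) : X → ℂ) =ᵐ[μ] fun x => ∑ i ∈ s, (g i : X → ℂ) x := by
  classical
  induction s using Finset.induction_on with
  | empty => simp only [Finset.sum_empty]; exact Lp.coeFn_zero (E := ℂ) (p := 2) (μ := μ)
  | insert _ _ hi ih =>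
    rename_i a s
    rw [Finset.sum_insert hi]
    filter_upwards [Lp.coeFn_add (g a) (∑ i ∈ s, g i), ih] with x hx1 hx2
    simp only [Pi.add_apply] at hx1
    rw [hx1, hx2, Finset.sum_insert hi]

/-- Norm of an orthonormal combination. -/
lemma orthonormal_norm_sq_sum {E : Type*} [NormedAddCommGroup E] [InnerProductSpace ℂ E]
    {e : ℕ → E} (he : Orthonormal ℂ e) (a : ℕ → ℂ) (s : Finset ℕ) :
    ‖∑ i ∈ s, a i • e i‖ ^ 2 = ∑ i ∈ s, ‖a i‖ ^ 2 := by
  have h : (inner ℂ (∑ i ∈ s, a i • e i) (∑ i ∈ s, a i • e i) : ℂ)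
      = ∑ i ∈ s, (starRingEnd ℂ) (a i) * a i := by
    rw [sum_inner]
    refine Finset.sum_congr rfl fun i hi => ?_
    rw [inner_smul_left, he.inner_right_sum a hi]
  rw [InnerProductSpace.norm_sq_eq_re_inner (𝕜 := ℂ), h]
  simp [RCLike.conj_mul, ← Complex.ofReal_pow]

/-- **Pointwise ℓ² bound for an L²→L^∞ bounded operator.** If `A : L²(μ) → L²(μ)` maps
into `L^∞` with `‖A f‖_∞ ≤ c ‖f‖₂`, and `(eᵢ)` is an orthonormal sequence with
representatives `Fᵢ` of `A eᵢ`, then `Σᵢ |Fᵢ(x)|² ≤ c²` for a.e. `x`. -/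
theorem pointwise_ell2_bound {X : Type*} [MeasurableSpace X] (μ : Measure X)
    [SigmaFinite μ] (c : ℝ) (hc : 0 < c)
    (A : Lp ℂ 2 μ →L[ℂ] Lp ℂ 2 μ)
    (hA : ∀ f : Lp ℂ 2 μ, ∀ᵐ x ∂μ, ‖(A f : Lp ℂ 2 μ) x‖ ≤ c * ‖f‖)
    (e : ℕ → Lp ℂ 2 μ) (he : Orthonormal ℂ e)
    (F : ℕ → X → ℂ) (hF : ∀ i, F i =ᵐ[μ] (A (e i) : Lp ℂ 2 μ)) :
    ∀ᵐ x ∂μ, ∑' i : ℕ, ‖F i x‖ ^ 2 ≤ c ^ 2 := by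
  classical
  -- key pointwise bound for fixed coefficients
  have key : ∀ a : ℕ → ℂ, ∀ n : ℕ, ∀ᵐ x ∂μ,
      ‖∑ i ∈ Finset.range n, a i * F i x‖ ≤ c * ‖∑ i ∈ Finset.range n, a i • e i‖ := by
    intro a n
    set f : Lp ℂ 2 μ := ∑ i ∈ Finset.range n, a i • e i with hf
    have hAf : A f = ∑ i ∈ Finset.range n, a i • A (e i) := by
      rw [hf, map_sum]; simp
    have h2 : ((A f : Lp ℂ 2 μ) : X → ℂ)
        =ᵐ[μ] fun x => ∑ i ∈ Finset.range n, a i * F i x := by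
      rw [hAf]
      have h3 := Lp_coeFn_finsum (Finset.range n) (fun i => a i • A (e i))
      have h4 : ∀ i ∈ Finset.range n,
          ((a i • A (e i) : Lp ℂ 2 μ) : X → ℂ) =ᵐ[μ] fun x => a i * F i x := by
        intro i _
        filter_upwards [Lp.coeFn_smul (a i) (A (e i)), hF i] with x hx1 hx2
        rw [hx1, Pi.smul_apply, ← hx2, smul_eq_mul]
      have h5 : ∀ᵐ x ∂μ, ∀ i ∈ Finset.range n,
          ((a i • A (e i) : Lp ℂ 2 μ) : X → ℂ) x = a i * F i x :=
        (ae_ball_iff (Finset.range n).countable_toSet).2 h4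
      filter_upwards [h3, h5] with x hx1 hx2
      rw [hx1]
      exact Finset.sum_congr rfl hx2
    filter_upwards [hA f, h2] with x hx1 hx2
    rw [← hx2]
    exact hx1
  -- countable dense set of coefficient vectors
  obtain ⟨D, hDc, hDd⟩ := TopologicalSpace.exists_countable_dense (ℕ → ℂ)
  have hae : ∀ᵐ x ∂μ, ∀ a ∈ D, ∀ n : ℕ,
      ‖∑ i ∈ Finset.range n, a i * F i x‖ ≤ c * ‖∑ i ∈ Finset.range n, a i • e i‖ := by
    rw [ae_ball_iff hDc]
    intro a _
    rw [ae_all_iff]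
    exact key a
  filter_upwards [hae] with x hx
  -- for the good x, extend to all coefficient vectors by continuity
  have hall : ∀ a : ℕ → ℂ, ∀ n : ℕ,
      ‖∑ i ∈ Finset.range n, a i * F i x‖ ≤ c * ‖∑ i ∈ Finset.range n, a i • e i‖ := by
    intro a n
    have hcl : IsClosed {a : ℕ → ℂ |
        ‖∑ i ∈ Finset.range n, a i * F i x‖ ≤ c * ‖∑ i ∈ Finset.range n, a i • e i‖} := by
      apply isClosed_le
      · exact (continuous_finset_sum _ fun i _ => (continuous_apply i).mul continuous_const).norm
      · exact continuous_const.mul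
          (continuous_finset_sum _ fun i _ => (continuous_apply i).smul continuous_const).norm
    have hsub : D ⊆ {a : ℕ → ℂ |
        ‖∑ i ∈ Finset.range n, a i * F i x‖ ≤ c * ‖∑ i ∈ Finset.range n, a i • e i‖} :=
      fun a ha => hx a ha n
    have := hcl.closure_subset_iff.2 hsub
    rw [hDd.closure_eq] at this
    exact this (Set.mem_univ a)
  -- plug in the conjugate coefficients
  have hbound : ∀ n : ℕ, ∑ i ∈ Finset.range n, ‖F i x‖ ^ 2 ≤ c ^ 2 := by
    intro n
    set a : ℕ → ℂ := fun i => (starRingEnd ℂ) (F i x) with ha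
    set S : ℝ := ∑ i ∈ Finset.range n, ‖F i x‖ ^ 2 with hS
    have hS0 : 0 ≤ S := Finset.sum_nonneg fun i _ => sq_nonneg _
    have hlhs : ‖∑ i ∈ Finset.range n, a i * F i x‖ = S := by
      have : ∑ i ∈ Finset.range n, a i * F i x = ((S : ℝ) : ℂ) := by
        rw [hS, Complex.ofReal_sum]
        refine Finset.sum_congr rfl fun i _ => ?_
        rw [ha]
        exact_mod_cast RCLike.conj_mul (F i x)
      rw [this, Complex.norm_real, Real.norm_of_nonneg hS0]
    have hrhs : ‖∑ i ∈ Finset.range n, a i • e i‖ = Real.sqrt S := by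
      have h1 : ‖∑ i ∈ Finset.range n, a i • e i‖ ^ 2 = S := by
        rw [orthonormal_norm_sq_sum he a]
        refine Finset.sum_congr rfl fun i _ => ?_
        rw [ha]; simp
      rw [← h1, Real.sqrt_sq (norm_nonneg _)]
    have h := hall a n
    rw [hlhs, hrhs] at h
    have hsq : Real.sqrt S ^ 2 = S := Real.sq_sqrt hS0
    nlinarith [Real.sqrt_nonneg S, sq_nonneg (Real.sqrt S - c)]
  exact Real.tsum_le_of_sum_range_le (fun i => sq_nonneg _) hbound
end

section
/- Let (X, 𝔄, μ) be a σ-finite measure space, c > 0, and A : L²(μ;ℂ) → L²(μ;ℂ) a bounded linear operator such that for every f ∈ L²(μ), the image Af has an essentially bounded representative with essential supremum at most c·‖f‖_{L²}. Let m ∈ L²(μ). Then for every orthonormal sequence (eᵢ)_{i∈ℕ} in L²(μ) one has Σ_{i=1}^∞ ∫_X |m(x)|²·|(A eᵢ)(x)|² dμ(x) ≤ c²·∫_X |m(x)|² dμ(x); in particular, the operator f ↦ m·(Af) is Hilbert–Schmidt. -/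
open MeasureTheory

/-- coeFn of a finite sum in `Lp`. -/
lemma lp_coeFn_finset_sum {X : Type*} [MeasurableSpace X] (μ : Measure X) (s : Finset ℕ)
    (f : ℕ → Lp ℂ 2 μ) : ((∑ i ∈ s, f i : Lp ℂ 2 μ) : X → ℂ) =ᵐ[μ] fun x => ∑ i ∈ s, f i x := by
  induction s using Finset.cons_induction with
  | empty => simp only [Finset.sum_empty]; exact Lp.coeFn_zero ℂ 2 μ
  | cons i s hi ih =>
    rw [Finset.sum_cons]
    filter_upwards [Lp.coeFn_add (f i) (∑ j ∈ s, f j), ih] with x h1 h2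
    rw [h1, Pi.add_apply, h2, Finset.sum_cons]

/-- Norm of a finite orthonormal combination. -/
lemma orthonormal_norm_finset_sum {E : Type*} [NormedAddCommGroup E] [InnerProductSpace ℂ E]
    (e : ℕ → E) (he : Orthonormal ℂ e) (a : ℕ → ℂ) (s : Finset ℕ) :
    ‖∑ i ∈ s, a i • e i‖ = Real.sqrt (∑ i ∈ s, ‖a i‖ ^ 2) := by
  have h : ‖∑ i ∈ s, a i • e i‖ ^ 2 = ∑ i ∈ s, ‖a i‖ ^ 2 := by
    have h1 := he.inner_sum a a s
    have h2 : (∑ i ∈ s, (starRingEnd ℂ) (a i) * a i) = ((∑ i ∈ s, ‖a i‖ ^ 2 : ℝ) : ℂ) := by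
      push_cast
      refine Finset.sum_congr rfl fun i _ => ?_
      rw [mul_comm, Complex.mul_conj, Complex.normSq_eq_norm_sq]
      simp
    rw [h2] at h1
    rw [← inner_self_eq_norm_sq (𝕜 := ℂ), h1]
    simp [← Complex.ofReal_pow]
  rw [← Real.sqrt_sq (norm_nonneg _), h]

/-- **Hilbert–Schmidt bound for a weighted L²→L^∞ bounded operator.** If
`A : L²(μ) → L²(μ)` satisfies `‖A f‖_∞ ≤ c ‖f‖₂` and `m ∈ L²(μ)`, then for every
orthonormal sequence `(eᵢ)`, `Σᵢ ∫ |m|² |A eᵢ|² dμ ≤ c² ∫ |m|² dμ`. -/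
theorem hilbert_schmidt_bound {X : Type*} [MeasurableSpace X] (μ : Measure X)
    [SigmaFinite μ] (c : ℝ) (hc : 0 < c)
    (A : Lp ℂ 2 μ →L[ℂ] Lp ℂ 2 μ)
    (hA : ∀ f : Lp ℂ 2 μ, ∀ᵐ x ∂μ, ‖(A f : Lp ℂ 2 μ) x‖ ≤ c * ‖f‖)
    (m : X → ℂ) (hm : MemLp m 2 μ) :
    ∀ e : ℕ → Lp ℂ 2 μ, Orthonormal ℂ e →
      ∑' i : ℕ, ∫ x, ‖m x‖ ^ 2 * ‖(A (e i) : Lp ℂ 2 μ) x‖ ^ 2 ∂μ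
        ≤ c ^ 2 * ∫ x, ‖m x‖ ^ 2 ∂μ := by
  intro e he
  set v : ℕ → X → ℂ := fun i x => (A (e i) : Lp ℂ 2 μ) x with hv
  -- integrability of |m|^2
  have hm2 : Integrable (fun x => ‖m x‖ ^ 2) μ := hm.norm.integrable_sq
  -- each term is bounded a.e.
  have hbd : ∀ i : ℕ, ∀ᵐ x ∂μ, ‖v i x‖ ≤ c := by
    intro i
    filter_upwards [hA (e i)] with x hx
    simpa [he.1 i] using hx
  -- key finite-dimensional Bessel-type bound
  have key : ∀ s : Finset ℕ, ∀ᵐ x ∂μ, ∑ i ∈ s, ‖v i x‖ ^ 2 ≤ c ^ 2 := by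
    intro s
    obtain ⟨D, Dcount, Ddense⟩ := TopologicalSpace.exists_countable_dense (ℕ → ℂ)
    have hae : ∀ a : ℕ → ℂ, ∀ᵐ x ∂μ,
        ‖∑ i ∈ s, a i * v i x‖ ≤ c * Real.sqrt (∑ i ∈ s, ‖a i‖ ^ 2) := by
      intro a
      have h1 : ((A (∑ i ∈ s, a i • e i) : Lp ℂ 2 μ) : X → ℂ)
          =ᵐ[μ] fun x => ∑ i ∈ s, a i * v i x := by
        have hmap : A (∑ i ∈ s, a i • e i) = ∑ i ∈ s, a i • A (e i) := by
          rw [map_sum]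
          exact Finset.sum_congr rfl fun i _ => A.map_smul (a i) (e i)
        rw [hmap]
        refine (lp_coeFn_finset_sum μ s (fun i => a i • A (e i))).trans ?_
        have hall : ∀ᵐ x ∂μ, ∀ i, i ∈ s →
            ((a i • A (e i) : Lp ℂ 2 μ) : X → ℂ) x = a i * v i x := by
          rw [MeasureTheory.ae_all_iff]
          intro i
          filter_upwards [Lp.coeFn_smul (a i) (A (e i))] with x hx _
          simpa [smul_eq_mul] using hx
        filter_upwards [hall] with x hx
        exact Finset.sum_congr rfl fun i hi => hx i hi
      have h2 : ‖∑ i ∈ s, a i • e i‖ = Real.sqrt (∑ i ∈ s, ‖a i‖ ^ 2) :=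
        orthonormal_norm_finset_sum e he a s
      filter_upwards [hA (∑ i ∈ s, a i • e i), h1] with x hx h1x
      rw [← h1x, ← h2]
      exact hx
    have hae' : ∀ᵐ x ∂μ, ∀ a ∈ D,
        ‖∑ i ∈ s, a i * v i x‖ ≤ c * Real.sqrt (∑ i ∈ s, ‖a i‖ ^ 2) :=
      (MeasureTheory.ae_ball_iff Dcount).2 fun a _ => hae a
    filter_upwards [hae'] with x hx
    have hall : ∀ a : ℕ → ℂ, ‖∑ i ∈ s, a i * v i x‖ ≤ c * Real.sqrt (∑ i ∈ s, ‖a i‖ ^ 2) := by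
      have hcl : IsClosed {a : ℕ → ℂ |
          ‖∑ i ∈ s, a i * v i x‖ ≤ c * Real.sqrt (∑ i ∈ s, ‖a i‖ ^ 2)} := by
        apply isClosed_le
        · exact (continuous_finset_sum s fun i _ =>
            (continuous_apply i).mul continuous_const).norm
        · exact continuous_const.mul (Real.continuous_sqrt.comp
            (continuous_finset_sum s fun i _ => ((continuous_apply i).norm.pow 2)))
      intro a
      exact closure_minimal (fun b hb => hx b hb) hcl (Ddense a)
    have h := hall (fun i => starRingEnd ℂ (v i x))
    have hsum : (∑ i ∈ s, (starRingEnd ℂ) (v i x) * v i x)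
        = ((∑ i ∈ s, ‖v i x‖ ^ 2 : ℝ) : ℂ) := by
      push_cast
      refine Finset.sum_congr rfl fun i _ => ?_
      rw [mul_comm, Complex.mul_conj, Complex.normSq_eq_norm_sq]
      simp [← Complex.ofReal_pow]
    rw [hsum] at h
    have ht0 : (0 : ℝ) ≤ ∑ i ∈ s, ‖v i x‖ ^ 2 :=
      Finset.sum_nonneg fun i _ => sq_nonneg _
    have hnorm : ‖((∑ i ∈ s, ‖v i x‖ ^ 2 : ℝ) : ℂ)‖ = ∑ i ∈ s, ‖v i x‖ ^ 2 := by
      rw [Complex.norm_real, Real.norm_of_nonneg ht0]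
    have hconj : (∑ i ∈ s, ‖(starRingEnd ℂ) (v i x)‖ ^ 2) = ∑ i ∈ s, ‖v i x‖ ^ 2 := by
      exact Finset.sum_congr rfl fun i _ => by rw [RCLike.norm_conj]
    rw [hnorm, hconj] at h
    -- from t ≤ c √t conclude t ≤ c²
    set t := ∑ i ∈ s, ‖v i x‖ ^ 2 with htdef
    have hs1 : Real.sqrt t ^ 2 = t := Real.sq_sqrt ht0
    have hs2 : 0 ≤ Real.sqrt t := Real.sqrt_nonneg t
    nlinarith [hs1, hs2, h, hc]
  -- per-term integrability
  have hint : ∀ i : ℕ, Integrable (fun x => ‖m x‖ ^ 2 * ‖v i x‖ ^ 2) μ := by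
    intro i
    refine Integrable.mono (hm2.const_mul (c ^ 2)) ?_ ?_
    · exact (hm.aestronglyMeasurable.norm.pow 2).mul
        ((Lp.aestronglyMeasurable (A (e i))).norm.pow 2)
    · filter_upwards [hbd i] with x hx
      have h1 : ‖v i x‖ ^ 2 ≤ c ^ 2 := by nlinarith [norm_nonneg (v i x)]
      have h2 : (0:ℝ) ≤ ‖m x‖ ^ 2 := sq_nonneg _
      rw [Real.norm_of_nonneg (mul_nonneg h2 (sq_nonneg _)),
        Real.norm_of_nonneg (mul_nonneg (sq_nonneg c) h2)]
      calc ‖m x‖ ^ 2 * ‖v i x‖ ^ 2 ≤ ‖m x‖ ^ 2 * c ^ 2 := by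
            exact mul_le_mul_of_nonneg_left h1 h2
        _ = c ^ 2 * ‖m x‖ ^ 2 := by ring
  -- finite sums are bounded
  have hfin : ∀ s : Finset ℕ,
      ∑ i ∈ s, ∫ x, ‖m x‖ ^ 2 * ‖v i x‖ ^ 2 ∂μ ≤ c ^ 2 * ∫ x, ‖m x‖ ^ 2 ∂μ := by
    intro s
    rw [← integral_finset_sum s fun i _ => hint i]
    rw [← integral_const_mul]
    refine integral_mono_ae (integrable_finset_sum s fun i _ => hint i)
      (hm2.const_mul (c ^ 2)) ?_
    filter_upwards [key s] with x hx
    calc ∑ i ∈ s, ‖m x‖ ^ 2 * ‖v i x‖ ^ 2 = ‖m x‖ ^ 2 * ∑ i ∈ s, ‖v i x‖ ^ 2 := by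
          rw [Finset.mul_sum]
      _ ≤ ‖m x‖ ^ 2 * c ^ 2 := mul_le_mul_of_nonneg_left hx (sq_nonneg _)
      _ = c ^ 2 * ‖m x‖ ^ 2 := by ring
  -- conclude via tsum
  have hnn : 0 ≤ c ^ 2 * ∫ x, ‖m x‖ ^ 2 ∂μ :=
    mul_nonneg (sq_nonneg c) (integral_nonneg fun x => sq_nonneg _)
  exact tsum_le_of_sum_le' hnn hfin
end

section
/- Let E be a finite-dimensional complex inner product space, P : E → E an orthogonal projection, and L : E → E a self-adjoint linear map with L(ker P) ⊆ ker P. Let φ, ψ ∈ E and suppose that for all x, y ∈ E satisfying P x = 0 and L x + (I − P) y = 0 one has ⟨y, φ⟩ = ⟨x, ψ⟩. Then P φ = 0 and L φ + (I − P) ψ = 0. -/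
open scoped ComplexInnerProductSpace

/-- **Recovering the vertex boundary condition.** Let `P` be an orthogonal projection
and `L` self-adjoint with `L (ker P) ⊆ ker P` on a finite-dimensional complex inner
product space. If `⟪y, φ⟫ = ⟪x, ψ⟫` for all `x, y` with `P x = 0` and
`L x + (I−P) y = 0`, then `P φ = 0` and `L φ + (I−P) ψ = 0`. -/
theorem boundary_condition_of_generalized_eigenfunction
    {E : Type*} [NormedAddCommGroup E] [InnerProductSpace ℂ E] [FiniteDimensional ℂ E]
    (P L : E →ₗ[ℂ] E)
    (hP2 : ∀ x, P (P x) = P x)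
    (hPsa : ∀ x y, ⟪P x, y⟫ = ⟪x, P y⟫)
    (hLsa : ∀ x y, ⟪L x, y⟫ = ⟪x, L y⟫)
    (hLker : ∀ x, P x = 0 → P (L x) = 0)
    (φ ψ : E)
    (hyp : ∀ x y : E, P x = 0 → L x + (y - P y) = 0 → ⟪y, φ⟫ = ⟪x, ψ⟫) :
    P φ = 0 ∧ L φ + (ψ - P ψ) = 0 := by
  -- Step 1: P φ = 0
  have h1 : ⟪P φ, φ⟫ = 0 := by
    have := hyp 0 (P φ) (map_zero P) (by simp [hP2])
    simpa using this
  have hPφ : P φ = 0 := by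
    have : ⟪P φ, P φ⟫ = 0 := by
      have h := hPsa (P φ) φ
      rw [hP2] at h
      rw [← h]
      exact h1
    exact inner_self_eq_zero.mp this
  refine ⟨hPφ, ?_⟩
  -- Step 2: for all x with P x = 0, ⟪x, L φ + ψ⟫ = 0
  have key : ∀ x : E, P x = 0 → ⟪x, L φ + ψ⟫ = (0 : ℂ) := by
    intro x hx
    have hy : L x + (-(L x) - P (-(L x))) = 0 := by
      rw [map_neg, hLker x hx]
      simp
    have := hyp x (-(L x)) hx hy
    rw [inner_neg_left, hLsa] at this
    rw [inner_add_right, ← this]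
    ring
  set u := L φ + (ψ - P ψ) with hu
  have hPu : P u = 0 := by
    rw [hu, map_add, map_sub, hLker φ hPφ, hP2]
    simp
  have huu : ⟪u, u⟫ = 0 := by
    have h2 := key u hPu
    have h3 : ⟪u, P ψ⟫ = 0 := by
      rw [← hPsa, hPu, inner_zero_left]
    calc ⟪u, u⟫ = ⟪u, L φ + ψ⟫ - ⟪u, P ψ⟫ := by
          rw [hu]; rw [inner_add_right, inner_sub_right, inner_add_right]; ring
      _ = 0 := by rw [h2, h3, sub_zero]
  exact inner_self_eq_zero.mp huu
end
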